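/- Converse step in the causal Chernoff–Stein lemma (finite-n version): with A_n as above, for any acceptance region B_n ⊆ (𝒳×𝒴)^n, Pr(B_n | H₁) ≥ 2^{−n(R+δ)} (1 − Pr(A_n^c | H₀) − Pr(B_n^c | H₀)). -/

import Mathlib

open scoped Classical
open Real

noncomputable section

variable {α β : Type} [Fintype α] [DecidableEq α] [Fintype β] [DecidableEq β]

/-- Probability of the event `E` under the joint pmf `p` of `(X^n, Y^n)`. -/
def pr {n : ℕ} (p : (Fin n → α) → (Fin n → β) → ℝ)
    (E : (Fin n → α) → (Fin n → β) → Prop) : ℝ :=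
  ∑ x, ∑ y, if E x y then p x y else 0

/-- `p` is a probability mass function on pairs of sequences. -/
def IsPmf {n : ℕ} (p : (Fin n → α) → (Fin n → β) → ℝ) : Prop :=
  (∀ x y, 0 ≤ p x y) ∧ ∑ x, ∑ y, p x y = 1

/-- The conditional pmf `p(x_i | x^{i-1}, y^{i-d})` evaluated along `(x, y)`. -/
def condX {n : ℕ} (p : (Fin n → α) → (Fin n → β) → ℝ) (d : ℕ) (i : Fin n)
    (x : Fin n → α) (y : Fin n → β) : ℝ :=
  pr p (fun x' y' => (∀ j, j < i → x' j = x j) ∧ x' i = x i ∧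
      ∀ j : Fin n, (j : ℕ) + d ≤ (i : ℕ) → y' j = y j) /
  pr p (fun x' y' => (∀ j, j < i → x' j = x j) ∧
      ∀ j : Fin n, (j : ℕ) + d ≤ (i : ℕ) → y' j = y j)

/-- The conditional pmf `p(y_i | y^{i-1}, x^{i-d})` evaluated along `(x, y)`. -/
def condY {n : ℕ} (p : (Fin n → α) → (Fin n → β) → ℝ) (d : ℕ) (i : Fin n)
    (x : Fin n → α) (y : Fin n → β) : ℝ :=
  pr p (fun x' y' => (∀ j, j < i → y' j = y j) ∧ y' i = y i ∧
      ∀ j : Fin n, (j : ℕ) + d ≤ (i : ℕ) → x' j = x j) /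
  pr p (fun x' y' => (∀ j, j < i → y' j = y j) ∧
      ∀ j : Fin n, (j : ℕ) + d ≤ (i : ℕ) → x' j = x j)

/-- Causally conditioned pmf `p(x^n || y^{n-d}) = ∏ᵢ p(xᵢ | x^{i-1}, y^{i-d})`. -/
def ccX {n : ℕ} (p : (Fin n → α) → (Fin n → β) → ℝ) (d : ℕ)
    (x : Fin n → α) (y : Fin n → β) : ℝ :=
  ∏ i, condX p d i x y

/-- Causally conditioned pmf `p(y^n || x^{n-d}) = ∏ᵢ p(yᵢ | y^{i-1}, x^{i-d})`. -/
def ccY {n : ℕ} (p : (Fin n → α) → (Fin n → β) → ℝ) (d : ℕ)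
    (x : Fin n → α) (y : Fin n → β) : ℝ :=
  ∏ i, condY p d i x y

/-- Marginal pmf of `X^n`. -/
def pX {n : ℕ} (p : (Fin n → α) → (Fin n → β) → ℝ) (x : Fin n → α) : ℝ := ∑ y, p x y

/-- Marginal pmf of `Y^n`. -/
def pY {n : ℕ} (p : (Fin n → α) → (Fin n → β) → ℝ) (y : Fin n → β) : ℝ := ∑ x, p x y

/-- `H(X^n)` in bits. -/
def HX {n : ℕ} (p : (Fin n → α) → (Fin n → β) → ℝ) : ℝ :=
  -(∑ x, ∑ y, p x y * Real.logb 2 (pX p x))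

/-- `H(Y^n)` in bits. -/
def HY {n : ℕ} (p : (Fin n → α) → (Fin n → β) → ℝ) : ℝ :=
  -(∑ x, ∑ y, p x y * Real.logb 2 (pY p y))

/-- Joint entropy `H(X^n, Y^n)` in bits. -/
def Hjoint {n : ℕ} (p : (Fin n → α) → (Fin n → β) → ℝ) : ℝ :=
  -(∑ x, ∑ y, p x y * Real.logb 2 (p x y))

/-- Conditional entropy `H(X_i | X^{i-1}, Y^{i-d})` in bits. -/
def HcondX {n : ℕ} (p : (Fin n → α) → (Fin n → β) → ℝ) (d : ℕ) (i : Fin n) : ℝ :=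
  -(∑ x, ∑ y, p x y * Real.logb 2 (condX p d i x y))

/-- Conditional entropy `H(Y_i | Y^{i-1}, X^{i-d})` in bits. -/
def HcondY {n : ℕ} (p : (Fin n → α) → (Fin n → β) → ℝ) (d : ℕ) (i : Fin n) : ℝ :=
  -(∑ x, ∑ y, p x y * Real.logb 2 (condY p d i x y))

/-- Causally conditional entropy `H(X^n || Y^{n-d}) = Σᵢ H(Xᵢ | X^{i-1}, Y^{i-d})`. -/
def HccX {n : ℕ} (p : (Fin n → α) → (Fin n → β) → ℝ) (d : ℕ) : ℝ := ∑ i, HcondX p d i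

/-- Causally conditional entropy `H(Y^n || X^{n-d})`. -/
def HccY {n : ℕ} (p : (Fin n → α) → (Fin n → β) → ℝ) (d : ℕ) : ℝ := ∑ i, HcondY p d i

/-- Conditional mutual information `I(Y^i; X_i | X^{i-1})`
(as the expectation of `log (p(xᵢ|x^{i-1},y^i) / p(xᵢ|x^{i-1}))`;
note `condX p n` is `p(xᵢ|x^{i-1})`, conditioning on no `y`'s at all). -/
def cmiYX {n : ℕ} (p : (Fin n → α) → (Fin n → β) → ℝ) (i : Fin n) : ℝ :=
  ∑ x, ∑ y, p x y * Real.logb 2 (condX p 0 i x y / condX p n i x y)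

/-- Conditional mutual information `I(X^i; Y_i | Y^{i-1})`. -/
def cmiXY {n : ℕ} (p : (Fin n → α) → (Fin n → β) → ℝ) (i : Fin n) : ℝ :=
  ∑ x, ∑ y, p x y * Real.logb 2 (condY p 0 i x y / condY p n i x y)

/-- Directed information `I(Y^n → X^n) = Σᵢ I(Y^i; X_i | X^{i-1})`. -/
def dirYX {n : ℕ} (p : (Fin n → α) → (Fin n → β) → ℝ) : ℝ := ∑ i, cmiYX p i

/-- Directed information `I(X^n → Y^n) = Σᵢ I(X^i; Y_i | Y^{i-1})`. -/
def dirXY {n : ℕ} (p : (Fin n → α) → (Fin n → β) → ℝ) : ℝ := ∑ i, cmiXY p i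

/-- Directed information `I(Y^{n-1} → X^n) = Σᵢ I(Y^{i-1}; X_i | X^{i-1})`
(the term for `i = 1` vanishes, so we may sum over all `i`). -/
def dirY1X {n : ℕ} (p : (Fin n → α) → (Fin n → β) → ℝ) : ℝ :=
  ∑ i, ∑ x, ∑ y, p x y * Real.logb 2 (condX p 1 i x y / condX p n i x y)

/-- Mutual information `I(X^n; Y^n)` in bits. -/
def miXY {n : ℕ} (p : (Fin n → α) → (Fin n → β) → ℝ) : ℝ :=
  ∑ x, ∑ y, p x y * Real.logb 2 (p x y / (pX p x * pY p y))

/-- The acceptance region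
`A_n = {(x^n,y^n) : |log (p(y^n||x^n)/p(y^n)) − nR| < nδ}` (on which both
`p(y^n||x^n)` and `p(y^n)` are positive, so the log-likelihood ratio is
well defined). -/
def acceptRegion {n : ℕ} (p : (Fin n → α) → (Fin n → β) → ℝ) (R δ : ℝ)
    (x : Fin n → α) (y : Fin n → β) : Prop :=
  0 < pY p y ∧ 0 < ccY p 0 x y ∧
  |Real.logb 2 (ccY p 0 x y / pY p y) - (n : ℝ) * R| < (n : ℝ) * δ

lemma pr_nonneg {n : ℕ} {p : (Fin n → α) → (Fin n → β) → ℝ}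
    (h0 : ∀ x y, 0 ≤ p x y) (E : (Fin n → α) → (Fin n → β) → Prop) :
    0 ≤ pr p E := by
  refine Finset.sum_nonneg fun x _ => Finset.sum_nonneg fun y _ => ?_
  split
  · exact h0 x y
  · exact le_refl 0

lemma le_pr {n : ℕ} {p : (Fin n → α) → (Fin n → β) → ℝ}
    (h0 : ∀ x y, 0 ≤ p x y) {E : (Fin n → α) → (Fin n → β) → Prop}
    {x : Fin n → α} {y : Fin n → β} (h : E x y) : p x y ≤ pr p E := by
  have h1 : p x y ≤ ∑ y', if E x y' then p x y' else 0 := by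
    have := Finset.single_le_sum (s := Finset.univ)
      (f := fun y' => if E x y' then p x y' else 0)
      (fun y' _ => by split
                      · exact h0 x y'
                      · exact le_refl 0) (Finset.mem_univ y)
    simpa [h] using this
  unfold pr
  refine h1.trans ?_
  exact Finset.single_le_sum (s := Finset.univ)
    (f := fun x' => ∑ y', if E x' y' then p x' y' else 0)
    (fun x' _ => Finset.sum_nonneg fun y' _ => by split
                                                  · exact h0 x' y'
                                                  · exact le_refl 0)
    (Finset.mem_univ x)

lemma pr_congr {n : ℕ} {p : (Fin n → α) → (Fin n → β) → ℝ}
    {E F : (Fin n → α) → (Fin n → β) → Prop}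
    (h : ∀ x y, E x y ↔ F x y) : pr p E = pr p F := by
  unfold pr
  refine Finset.sum_congr rfl fun x _ => Finset.sum_congr rfl fun y _ => ?_
  simp [h x y]

lemma prod_div_telescope (g : ℕ → ℝ) (hg : ∀ k, g k ≠ 0) (m : ℕ) :
    ∏ k ∈ Finset.range m, g (k + 1) / g k = g m / g 0 := by
  induction m with
  | zero => rw [Finset.prod_range_zero, div_self (hg 0)]
  | succ m ih =>
    have h1 := hg m
    have h2 := hg 0
    have h3 := hg (m + 1)
    rw [Finset.prod_range_succ, ih]
    field_simp

lemma chain_rule {n : ℕ} {p : (Fin n → α) → (Fin n → β) → ℝ} (hp : IsPmf p)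
    {x : Fin n → α} {y : Fin n → β} (hpos : 0 < p x y) :
    ccX p 1 x y * ccY p 0 x y = p x y := by
  set M : ℕ → ℕ → ℝ := fun a b => pr p (fun x' y' =>
    (∀ j : Fin n, (j : ℕ) < a → x' j = x j) ∧
    (∀ j : Fin n, (j : ℕ) < b → y' j = y j)) with hM
  have hMpos : ∀ a b, 0 < M a b := fun a b =>
    lt_of_lt_of_le hpos (le_pr hp.1 ⟨fun j _ => rfl, fun j _ => rfl⟩)
  have hMne : ∀ a b, M a b ≠ 0 := fun a b => (hMpos a b).ne'
  have hX : ∀ i : Fin n, condX p 1 i x y = M ((i : ℕ) + 1) i / M i i := by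
    intro i
    unfold condX
    congr 1
    · apply pr_congr; intro x' y'
      constructor
      · rintro ⟨h1, h2, h3⟩
        refine ⟨fun j hj => ?_, fun j hj => h3 j (by omega)⟩
        rcases Nat.lt_succ_iff_lt_or_eq.mp hj with h | h
        · exact h1 j (Fin.lt_def.mpr h)
        · rw [Fin.ext h]; exact h2
      · rintro ⟨h1, h2⟩
        exact ⟨fun j hj => h1 j (Nat.lt_succ_of_lt (Fin.lt_def.mp hj)),
          h1 i (Nat.lt_succ_self _), fun j hj => h2 j (by omega)⟩
  have hY : ∀ i : Fin n, condY p 0 i x y = M ((i : ℕ) + 1) ((i : ℕ) + 1) / M ((i : ℕ) + 1) i := by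
    intro i
    unfold condY
    congr 1
    · apply pr_congr; intro x' y'
      constructor
      · rintro ⟨h1, h2, h3⟩
        refine ⟨fun j hj => h3 j (by omega), fun j hj => ?_⟩
        rcases Nat.lt_succ_iff_lt_or_eq.mp hj with h | h
        · exact h1 j (Fin.lt_def.mpr h)
        · rw [Fin.ext h]; exact h2
      · rintro ⟨h1, h2⟩
        exact ⟨fun j hj => h2 j (Nat.lt_succ_of_lt (Fin.lt_def.mp hj)),
          h2 i (Nat.lt_succ_self _), fun j hj => h1 j (by omega)⟩
    · apply pr_congr; intro x' y'
      constructor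
      · rintro ⟨h1, h2⟩
        exact ⟨fun j hj => h2 j (by omega), fun j hj => h1 j (Fin.lt_def.mp hj)⟩
      · rintro ⟨h1, h2⟩
        exact ⟨fun j hj => h2 j (Fin.lt_def.mpr hj), fun j hj => h1 j (by omega)⟩
  have hM00 : M 0 0 = 1 := by
    rw [hM]; unfold pr
    simp only [Nat.not_lt_zero, false_implies, implies_true, and_self, if_true]
    exact hp.2
  have hMnn : M n n = p x y := by
    rw [hM]; unfold pr
    have heq : ∀ (x' : Fin n → α) (y' : Fin n → β),
        ((∀ j : Fin n, (j : ℕ) < n → x' j = x j) ∧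
          (∀ j : Fin n, (j : ℕ) < n → y' j = y j)) ↔ (x' = x ∧ y' = y) := by
      intro x' y'
      constructor
      · rintro ⟨h1, h2⟩
        exact ⟨funext fun j => h1 j j.isLt, funext fun j => h2 j j.isLt⟩
      · rintro ⟨rfl, rfl⟩; exact ⟨fun _ _ => rfl, fun _ _ => rfl⟩
    simp only [heq, ite_and]
    simp [Finset.sum_ite_eq', Finset.sum_ite_eq]
  have key : ∀ i : Fin n, condX p 1 i x y * condY p 0 i x y =
      M ((i : ℕ) + 1) ((i : ℕ) + 1) / M i i := by
    intro i
    have h1 := hMne ((i : ℕ) + 1) i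
    have h2 := hMne (i : ℕ) i
    have h3 := hMne ((i : ℕ) + 1) ((i : ℕ) + 1)
    rw [hX i, hY i]
    field_simp
  calc ccX p 1 x y * ccY p 0 x y
      = ∏ i : Fin n, condX p 1 i x y * condY p 0 i x y := by
        rw [ccX, ccY, ← Finset.prod_mul_distrib]
    _ = ∏ i : Fin n, M ((i : ℕ) + 1) ((i : ℕ) + 1) / M i i :=
        Finset.prod_congr rfl fun i _ => key i
    _ = ∏ k ∈ Finset.range n, M (k + 1) (k + 1) / M k k :=
        Fin.prod_univ_eq_prod_range (fun k => M (k + 1) (k + 1) / M k k) n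
    _ = M n n / M 0 0 := prod_div_telescope (fun k => M k k) (fun k => hMne k k) n
    _ = p x y := by rw [hM00, hMnn, div_one]

/-- converse step in the causal Chernoff–Stein lemma (finite-`n`).
With the same hypotheses and `A_n` as in the achievability step, for any acceptance
region `B_n ⊆ (𝒳 × 𝒴)^n`,
`Pr(B_n | H₁) ≥ 2^{−n(R+δ)} (1 − Pr(A_nᶜ | H₀) − Pr(B_nᶜ | H₀))`. -/
theorem causal_stein_converse {n : ℕ}
    (p : (Fin n → α) → (Fin n → β) → ℝ) (hp : IsPmf p) (R δ : ℝ) (hδ : 0 < δ)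
    (B : (Fin n → α) → (Fin n → β) → Prop) :
    (2 : ℝ) ^ (-((n : ℝ) * (R + δ))) *
        (1 - (∑ x, ∑ y, if ¬ acceptRegion p R δ x y then p x y else 0) -
          (∑ x, ∑ y, if ¬ B x y then p x y else 0)) ≤
      ∑ x, ∑ y, if B x y then ccX p 1 x y * pY p y else 0 := by
  set c : ℝ := (2 : ℝ) ^ (-((n : ℝ) * (R + δ))) with hc
  have hc0 : 0 < c := Real.rpow_pos_of_pos two_pos _
  have hccX : ∀ x y, 0 ≤ ccX p 1 x y := by
    intro x y
    refine Finset.prod_nonneg fun i _ => ?_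
    unfold condX
    exact div_nonneg (pr_nonneg hp.1 _) (pr_nonneg hp.1 _)
  have hpYn : ∀ y, 0 ≤ pY p y := fun y => Finset.sum_nonneg fun x _ => hp.1 x y
  have hq0 : ∀ x y, 0 ≤ ccX p 1 x y * pY p y := fun x y =>
    mul_nonneg (hccX x y) (hpYn y)
  have key : ∀ x y, c * (if acceptRegion p R δ x y ∧ B x y then p x y else 0) ≤
      (if B x y then ccX p 1 x y * pY p y else 0) := by
    intro x y
    by_cases hB : B x y
    · by_cases hA : acceptRegion p R δ x y
      · simp only [hA, hB, and_self, if_true]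
        obtain ⟨hy, hcy, habs⟩ := hA
        have hlog : Real.logb 2 (ccY p 0 x y / pY p y) < (n : ℝ) * (R + δ) := by
          have h2 := (abs_lt.mp habs).2
          nlinarith
        have hdiv : ccY p 0 x y / pY p y < (2 : ℝ) ^ ((n : ℝ) * (R + δ)) :=
          (Real.logb_lt_iff_lt_rpow one_lt_two (div_pos hcy hy)).mp hlog
        have ht : (0 : ℝ) < (2 : ℝ) ^ ((n : ℝ) * (R + δ)) :=
          Real.rpow_pos_of_pos two_pos _
        have hlt : ccY p 0 x y < (2 : ℝ) ^ ((n : ℝ) * (R + δ)) * pY p y :=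
          (div_lt_iff₀ hy).mp hdiv
        have hccy : c * ccY p 0 x y ≤ pY p y := by
          have hcinv : c = ((2 : ℝ) ^ ((n : ℝ) * (R + δ)))⁻¹ := by
            rw [hc, Real.rpow_neg (by norm_num)]
          rw [hcinv, inv_mul_le_iff₀ ht]
          linarith
        rcases eq_or_lt_of_le (hp.1 x y) with h0 | h0
        · rw [← h0, mul_zero]; exact hq0 x y
        · rw [← chain_rule hp h0]
          calc c * (ccX p 1 x y * ccY p 0 x y)
              = ccX p 1 x y * (c * ccY p 0 x y) := by ring
            _ ≤ ccX p 1 x y * pY p y :=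
                mul_le_mul_of_nonneg_left hccy (hccX x y)
      · simp only [hA, false_and, if_false, if_pos hB, mul_zero]
        exact hq0 x y
    · simp [hB]
  have step2 : c * (∑ x, ∑ y, if acceptRegion p R δ x y ∧ B x y then p x y else 0)
      ≤ ∑ x, ∑ y, if B x y then ccX p 1 x y * pY p y else 0 := by
    rw [Finset.mul_sum]
    refine Finset.sum_le_sum fun x _ => ?_
    rw [Finset.mul_sum]
    exact Finset.sum_le_sum fun y _ => key x y
  have step1 : 1 - (∑ x, ∑ y, if ¬ acceptRegion p R δ x y then p x y else 0) -
      (∑ x, ∑ y, if ¬ B x y then p x y else 0) ≤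
      ∑ x, ∑ y, if acceptRegion p R δ x y ∧ B x y then p x y else 0 := by
    rw [← hp.2, ← Finset.sum_sub_distrib, ← Finset.sum_sub_distrib]
    refine Finset.sum_le_sum fun x _ => ?_
    rw [← Finset.sum_sub_distrib, ← Finset.sum_sub_distrib]
    refine Finset.sum_le_sum fun y _ => ?_
    by_cases hA : acceptRegion p R δ x y <;> by_cases hB : B x y <;>
      simp [hA, hB] <;> linarith [hp.1 x y]
  calc c * (1 - (∑ x, ∑ y, if ¬ acceptRegion p R δ x y then p x y else 0) -
        (∑ x, ∑ y, if ¬ B x y then p x y else 0))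
      ≤ c * (∑ x, ∑ y, if acceptRegion p R δ x y ∧ B x y then p x y else 0) :=
        mul_le_mul_of_nonneg_left step1 hc0.le
    _ ≤ _ := step2
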